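/- With the same setting, ‖∫_0^t (u^d(τ) − u*(τ)) dτ‖_∞ ≤ max_j (sup_{τ ∈ I_k̂} u*_j(τ) − inf_{τ ∈ I_k̂} u*_j(τ)) · Δt for any t ∈ [0, t_f], where I_k̂ = [(k̂−1)Δt, k̂Δt] is the interval containing t. In particular, since ∫_0^{(k̂−1)Δt} u^d = ∫_0^{(k̂−1)Δt} u*, the cumulative difference is controlled by the oscillation of u* on a single subinterval times Δt. -/

import Mathlib

open MeasureTheory intervalIntegral

/-- The cumulative difference between `u*` and its piecewise interval-average `u^d`
is bounded by the largest componentwise oscillation of `u*` on the subinterval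
containing `t`, times `Δt`. -/
theorem piecewise_average_cumulative_diff_le_oscillation
    (N T : ℕ) (hN : 0 < N) (hT : 0 < T) (tf : ℝ) (htf : 0 < tf)
    (Δt : ℝ) (hΔt : Δt = tf / T)
    (ustar ud : ℝ → Fin N → ℝ)
    (hbound : ∀ t ∈ Set.Icc (0 : ℝ) tf, ∀ j, ustar t j ∈ Set.Icc (0 : ℝ) 1)
    (hint : ∀ j, IntervalIntegrable (fun τ => ustar τ j) volume 0 tf)
    (hud : ∀ k : ℕ, k < T →
      ∀ t ∈ Set.Ico ((k : ℝ) * Δt) (((k : ℝ) + 1) * Δt), ∀ j,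
        ud t j = (1 / Δt) * ∫ τ in ((k : ℝ) * Δt)..(((k : ℝ) + 1) * Δt), ustar τ j) :
    ∀ t ∈ Set.Icc (0 : ℝ) tf, ∀ khat : ℕ, khat < T →
      t ∈ Set.Ico ((khat : ℝ) * Δt) (((khat : ℝ) + 1) * Δt) →
      ∀ j, |∫ τ in (0 : ℝ)..t, (ud τ j - ustar τ j)| ≤
        (Finset.univ.sup' (Finset.univ_nonempty_iff.mpr ⟨⟨0, hN⟩⟩)
          (fun j' : Fin N =>
            sSup ((fun τ => ustar τ j') ''
              Set.Icc ((khat : ℝ) * Δt) (((khat : ℝ) + 1) * Δt)) -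
            sInf ((fun τ => ustar τ j') ''
              Set.Icc ((khat : ℝ) * Δt) (((khat : ℝ) + 1) * Δt)))) * Δt := by
  intro t ht khat hkT htk j
  have hΔpos : 0 < Δt := by
    rw [hΔt]; positivity
  have hTΔ : (T : ℝ) * Δt = tf := by
    rw [hΔt]; field_simp
  -- interval endpoints
  set s : ℕ → ℝ := fun k => (k : ℝ) * Δt with hs
  have hs_mono : ∀ k : ℕ, s k ≤ s (k + 1) := by
    intro k
    simp only [hs]
    push_cast
    nlinarith
  have hs_succ : ∀ k : ℕ, s (k + 1) = ((k : ℝ) + 1) * Δt := by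
    intro k; simp only [hs]; push_cast; ring
  have hs_nonneg : ∀ k : ℕ, 0 ≤ s k := by
    intro k; simp only [hs]; positivity
  have hs_le_tf : ∀ k : ℕ, k ≤ T → s k ≤ tf := by
    intro k hk
    have : (k : ℝ) * Δt ≤ (T : ℝ) * Δt := by
      apply mul_le_mul_of_nonneg_right _ hΔpos.le
      exact_mod_cast hk
    simpa [hs, hTΔ] using this
  have hsub : ∀ k : ℕ, k < T → Set.Icc (s k) (s (k + 1)) ⊆ Set.Icc (0 : ℝ) tf := by
    intro k hk x hx
    exact ⟨le_trans (hs_nonneg k) hx.1, le_trans hx.2 (hs_le_tf (k + 1) hk)⟩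
  -- integrability of ustar on subintervals
  have hintsub : ∀ j' : Fin N, ∀ p q : ℝ, p ∈ Set.Icc (0 : ℝ) tf → q ∈ Set.Icc (0 : ℝ) tf →
      IntervalIntegrable (fun τ => ustar τ j') volume p q := by
    intro j' p q hp hq
    exact (hint j').mono_set (Set.uIcc_subset_uIcc
      (by rwa [Set.uIcc_of_le htf.le]) (by rwa [Set.uIcc_of_le htf.le]))
  -- the constant value of ud on the k-th interval
  set c : ℕ → ℝ := fun k => (1 / Δt) * ∫ τ in ((k : ℝ) * Δt)..(((k : ℝ) + 1) * Δt), ustar τ j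
    with hc
  have hud_eq : ∀ k : ℕ, k < T → ∀ x ∈ Set.Ico (s k) (s (k + 1)), ud x j = c k := by
    intro k hk x hx
    rw [hs_succ] at hx
    exact hud k hk x hx j
  -- ud is a.e. equal to the constant c k on Ioc (s k) (s (k+1))
  have hae : ∀ k : ℕ, k < T →
      (fun τ => ud τ j) =ᵐ[volume.restrict (Set.Ioc (s k) (s (k + 1)))] (fun _ => c k) := by
    intro k hk
    rw [Filter.EventuallyEq, ae_restrict_iff' measurableSet_Ioc, MeasureTheory.ae_iff]
    refine measure_mono_null (fun x hx => ?_) (Real.volume_singleton (a := s (k + 1)))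
    simp only [Set.mem_setOf_eq, Classical.not_imp] at hx
    obtain ⟨hxm, hne⟩ := hx
    by_contra hxb
    rw [Set.mem_singleton_iff] at hxb
    exact hne (hud_eq k hk x ⟨hxm.1.le, lt_of_le_of_ne hxm.2 hxb⟩)
  have hIoc : ∀ k : ℕ, Set.uIoc (s k) (s (k + 1)) = Set.Ioc (s k) (s (k + 1)) := by
    intro k; exact Set.uIoc_of_le (hs_mono k)
  -- ud is interval integrable on each subinterval
  have hud_ii : ∀ k : ℕ, k < T → IntervalIntegrable (fun τ => ud τ j) volume (s k) (s (k + 1)) := by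
    intro k hk
    refine (_root_.intervalIntegrable_const (c := c k)).congr_ae ?_
    rw [hIoc k]
    exact (hae k hk).symm
  have hust_ii : ∀ k : ℕ, k < T →
      IntervalIntegrable (fun τ => ustar τ j) volume (s k) (s (k + 1)) := by
    intro k hk
    exact hintsub j _ _ (hsub k hk ⟨le_rfl, hs_mono k⟩) (hsub k hk ⟨hs_mono k, le_rfl⟩)
  -- the integral of ud over a full subinterval equals that of ustar
  have hud_int_eq : ∀ k : ℕ, k < T →
      ∫ τ in (s k)..(s (k + 1)), ud τ j = ∫ τ in (s k)..(s (k + 1)), ustar τ j := by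
    intro k hk
    have h1 : ∫ τ in (s k)..(s (k + 1)), ud τ j = ∫ τ in (s k)..(s (k + 1)), c k := by
      apply intervalIntegral.integral_congr_ae
      rw [hIoc k]
      exact (ae_restrict_iff' measurableSet_Ioc).mp (hae k hk)
    rw [h1, intervalIntegral.integral_const]
    have h2 : s (k + 1) - s k = Δt := by rw [hs_succ]; simp only [hs]; ring
    rw [h2, hc, smul_eq_mul, hs_succ k]
    simp only [hs]
    field_simp
  -- the difference integrates to zero over each full subinterval
  have hD_ii : ∀ k : ℕ, k < T →
      IntervalIntegrable (fun τ => ud τ j - ustar τ j) volume (s k) (s (k + 1)) := by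
    intro k hk; exact (hud_ii k hk).sub (hust_ii k hk)
  have hDzero : ∀ k : ℕ, k < T →
      ∫ τ in (s k)..(s (k + 1)), (ud τ j - ustar τ j) = 0 := by
    intro k hk
    rw [intervalIntegral.integral_sub (hud_ii k hk) (hust_ii k hk), hud_int_eq k hk, sub_self]
  -- the integral up to s khat is zero
  have hs0 : s 0 = 0 := by simp [hs]
  have hpast : ∫ τ in (0 : ℝ)..(s khat), (ud τ j - ustar τ j) = 0 := by
    have hsum := intervalIntegral.sum_integral_adjacent_intervals
      (f := fun τ => ud τ j - ustar τ j) (a := s) (n := khat)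
      (fun k hk => hD_ii k (lt_trans hk hkT))
    rw [hs0] at hsum
    rw [← hsum]
    exact Finset.sum_eq_zero fun k hk => hDzero k (lt_trans (Finset.mem_range.mp hk) hkT)
  -- split the integral at s khat
  have hst : s khat ≤ t := htk.1
  have hte : t < s (khat + 1) := by rw [hs_succ]; exact htk.2
  have htmem : t ∈ Set.Icc (s khat) (s (khat + 1)) := ⟨hst, hte.le⟩
  have hud_ii_t : IntervalIntegrable (fun τ => ud τ j) volume (s khat) t := by
    refine (_root_.intervalIntegrable_const (c := c khat)).congr_ae ?_
    rw [Set.uIoc_of_le hst, Filter.EventuallyEq, ae_restrict_iff' measurableSet_Ioc]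
    refine Filter.Eventually.of_forall fun x hx => ?_
    exact (hud_eq khat hkT x ⟨hx.1.le, lt_of_le_of_lt hx.2 hte⟩).symm
  have hust_ii_t : IntervalIntegrable (fun τ => ustar τ j) volume (s khat) t := by
    exact hintsub j _ _ (hsub khat hkT ⟨le_rfl, hs_mono khat⟩) ht
  have hD_ii_t : IntervalIntegrable (fun τ => ud τ j - ustar τ j) volume (s khat) t :=
    hud_ii_t.sub hust_ii_t
  have hD_ii_past : IntervalIntegrable (fun τ => ud τ j - ustar τ j) volume 0 (s khat) := by
    rw [← hs0]
    exact IntervalIntegrable.trans_iterate fun k hk => hD_ii k (lt_trans hk hkT)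
  have hsplit : ∫ τ in (0 : ℝ)..t, (ud τ j - ustar τ j)
      = ∫ τ in (s khat)..t, (ud τ j - ustar τ j) := by
    rw [← intervalIntegral.integral_add_adjacent_intervals hD_ii_past hD_ii_t, hpast, zero_add]
  -- oscillation bounds
  set S : Fin N → Set ℝ := fun j' =>
    (fun τ => ustar τ j') '' Set.Icc ((khat : ℝ) * Δt) (((khat : ℝ) + 1) * Δt) with hS
  have hIccEq : Set.Icc ((khat : ℝ) * Δt) (((khat : ℝ) + 1) * Δt)
      = Set.Icc (s khat) (s (khat + 1)) := by rw [hs_succ]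
  have hSne : (S j).Nonempty := by
    refine ⟨ustar ((khat : ℝ) * Δt) j, Set.mem_image_of_mem _ ?_⟩
    rw [hIccEq]
    exact ⟨le_rfl, hs_mono khat⟩
  have hbddA : BddAbove (S j) := by
    refine ⟨1, fun y hy => ?_⟩
    obtain ⟨τ, hτ, rfl⟩ := hy
    rw [hIccEq] at hτ
    exact (hbound τ (hsub khat hkT hτ) j).2
  have hbddB : BddBelow (S j) := by
    refine ⟨0, fun y hy => ?_⟩
    obtain ⟨τ, hτ, rfl⟩ := hy
    rw [hIccEq] at hτ
    exact (hbound τ (hsub khat hkT hτ) j).1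
  have hle_sSup : ∀ τ ∈ Set.Icc (s khat) (s (khat + 1)), ustar τ j ≤ sSup (S j) := by
    intro τ hτ
    exact le_csSup hbddA ⟨τ, by rwa [hIccEq], rfl⟩
  have hsInf_le : ∀ τ ∈ Set.Icc (s khat) (s (khat + 1)), sInf (S j) ≤ ustar τ j := by
    intro τ hτ
    exact csInf_le hbddB ⟨τ, by rwa [hIccEq], rfl⟩
  -- bounds on the average c khat
  have hlen : s (khat + 1) - s khat = Δt := by rw [hs_succ]; simp only [hs]; ring
  have hInt_upper : ∫ τ in (s khat)..(s (khat + 1)), ustar τ j ≤ sSup (S j) * Δt := by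
    have := intervalIntegral.integral_mono_on (hs_mono khat) (hust_ii khat hkT)
      (_root_.intervalIntegrable_const (c := sSup (S j))) hle_sSup
    rwa [intervalIntegral.integral_const, hlen, smul_eq_mul, mul_comm] at this
  have hInt_lower : sInf (S j) * Δt ≤ ∫ τ in (s khat)..(s (khat + 1)), ustar τ j := by
    have := intervalIntegral.integral_mono_on (hs_mono khat)
      (_root_.intervalIntegrable_const (c := sInf (S j))) (hust_ii khat hkT) hsInf_le
    rwa [intervalIntegral.integral_const, hlen, smul_eq_mul, mul_comm] at this
  have hceq : c khat = (1 / Δt) * ∫ τ in (s khat)..(s (khat + 1)), ustar τ j := by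
    rw [hs_succ]
  have hc_upper : c khat ≤ sSup (S j) := by
    rw [hceq]
    have h := mul_le_mul_of_nonneg_left hInt_upper (by positivity : (0:ℝ) ≤ 1 / Δt)
    calc (1 / Δt) * ∫ τ in (s khat)..(s (khat + 1)), ustar τ j
        ≤ (1 / Δt) * (sSup (S j) * Δt) := h
      _ = sSup (S j) := by field_simp
  have hc_lower : sInf (S j) ≤ c khat := by
    rw [hceq]
    have h := mul_le_mul_of_nonneg_left hInt_lower (by positivity : (0:ℝ) ≤ 1 / Δt)
    calc sInf (S j) = (1 / Δt) * (sInf (S j) * Δt) := by field_simp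
      _ ≤ (1 / Δt) * ∫ τ in (s khat)..(s (khat + 1)), ustar τ j := h
  -- pointwise bound on the current interval
  set osc : Fin N → ℝ := fun j' => sSup (S j') - sInf (S j') with hosc
  have hptwise : ∀ x ∈ Set.uIoc (s khat) t, ‖ud x j - ustar x j‖ ≤ osc j := by
    intro x hx
    rw [Set.uIoc_of_le hst] at hx
    have hxI : x ∈ Set.Icc (s khat) (s (khat + 1)) := ⟨hx.1.le, le_trans hx.2 hte.le⟩
    rw [hud_eq khat hkT x ⟨hx.1.le, lt_of_le_of_lt hx.2 hte⟩, Real.norm_eq_abs, abs_sub_le_iff]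
    constructor
    · have := hsInf_le x hxI; simp only [hosc]; linarith
    · have := hle_sSup x hxI; simp only [hosc]; linarith
  have hbnd := intervalIntegral.norm_integral_le_of_norm_le_const hptwise
  rw [Real.norm_eq_abs] at hbnd
  have hosc_nonneg : 0 ≤ osc j := by
    have := hle_sSup (s khat) ⟨le_rfl, hs_mono khat⟩
    have := hsInf_le (s khat) ⟨le_rfl, hs_mono khat⟩
    simp only [hosc]; linarith
  have habs : |t - s khat| ≤ Δt := by
    rw [abs_of_nonneg (by linarith)]
    have := hte; rw [hs_succ] at this
    simp only [hs] at this ⊢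
    nlinarith
  have hstep : |∫ τ in (0 : ℝ)..t, (ud τ j - ustar τ j)| ≤ osc j * Δt := by
    rw [hsplit]
    exact le_trans hbnd (mul_le_mul_of_nonneg_left habs hosc_nonneg)
  refine le_trans hstep (mul_le_mul_of_nonneg_right ?_ hΔpos.le)
  exact Finset.le_sup' (fun j' : Fin N => sSup (S j') - sInf (S j')) (Finset.mem_univ j)
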